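/- Let A = sI − B where B is an m×m matrix with nonnegative entries and s > ρ(B). Then for every real p with p < 0 or 1 ≤ p ≤ 2, and all subsets I, J of {1,...,m}: tr(A[I]^p) + tr(A[J]^p) ≤ tr(A[I∪J]^p) + tr(A[I∩J]^p), where A^p is defined by the binomial series s^p Σᵢ C(p,i)(−s)^{−i}Bⁱ. -/

import Mathlib

open Matrix

/-- The principal submatrix of `B` with rows and columns in `I`. -/
def rsub {m : ℕ} (B : Matrix (Fin m) (Fin m) ℝ) (I : Finset (Fin m)) :
    Matrix I I ℝ :=
  B.submatrix (fun i : I => (i : Fin m)) (fun i : I => (i : Fin m))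

/-- Generalized binomial coefficient `C(p, i) = p (p-1) ⋯ (p-i+1) / i!`. -/
noncomputable def genBinom (p : ℝ) (i : ℕ) : ℝ :=
  (∏ k ∈ Finset.range i, (p - k)) / (Nat.factorial i)

/-- `(s·Id - B)^p`, defined by the binomial series
`s^p Σ_{i≥0} C(p,i) (-s)^{-i} Bⁱ`, absolutely convergent when `s > ρ(B)`. -/
noncomputable def mPow {n : Type*} [Fintype n] [DecidableEq n]
    (s p : ℝ) (B : Matrix n n ℝ) : Matrix n n ℝ :=
  ∑' i : ℕ, (s ^ p * genBinom p i * ((-s) ^ i)⁻¹) • B ^ i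

section Walks
variable {n : Type*} [Fintype n] [DecidableEq n]

/-- Product of matrix entries along the path `v 0, v 1, ..., v k`. -/
def pathProd (M : Matrix n n ℝ) {k : ℕ} (v : Fin (k + 1) → n) : ℝ :=
  ∏ j : Fin k, M (v j.castSucc) (v j.succ)

omit [Fintype n] [DecidableEq n] in
lemma pathProd_cons (M : Matrix n n ℝ) {k : ℕ} (a : n) (v : Fin (k + 1) → n) :
    pathProd M (Fin.cons a v) = M a (v 0) * pathProd M v := by
  unfold pathProd
  rw [Fin.prod_univ_succ]
  refine congrArg₂ _ (by simp) (Finset.prod_congr rfl fun j _ => ?_)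
  rw [← Fin.succ_castSucc, Fin.cons_succ, Fin.cons_succ]

lemma pow_succ_apply (M : Matrix n n ℝ) :
    ∀ (i : ℕ) (a b : n),
      (M ^ (i + 1)) a b = ∑ w : Fin i → n, pathProd M (Fin.cons a (Fin.snoc w b)) := by
  intro i
  induction i with
  | zero =>
    intro a b
    rw [pow_one]
    rw [Fintype.sum_eq_single (fun _ => b)]
    · rw [pathProd, Fin.prod_univ_one]
      rw [Fin.castSucc_zero, Fin.cons_zero, Fin.cons_succ]
      show M a b = M a ((Fin.snoc (fun _ : Fin 0 => b) b : Fin 1 → n) (Fin.last 0))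
      rw [Fin.snoc_last]
    · intro w hw
      exact absurd (Subsingleton.elim _ _) hw
  | succ i ih =>
    intro a b
    rw [pow_succ']
    rw [Matrix.mul_apply]
    calc ∑ c : n, M a c * (M ^ (i + 1)) c b
        = ∑ c : n, ∑ w : Fin i → n, M a c * pathProd M (Fin.cons c (Fin.snoc w b)) := by
          refine Finset.sum_congr rfl fun c _ => ?_
          rw [ih c b, Finset.mul_sum]
      _ = ∑ q : n × (Fin i → n), M a q.1 * pathProd M (Fin.cons q.1 (Fin.snoc q.2 b)) := by
          rw [Fintype.sum_prod_type]
      _ = ∑ w : Fin (i + 1) → n, pathProd M (Fin.cons a (Fin.snoc w b)) := by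
          refine Fintype.sum_equiv (Fin.consEquiv fun _ => n) _ _ fun q => ?_
          have he : (Fin.consEquiv fun _ => n) q = Fin.cons q.1 q.2 := rfl
          rw [he]
          have h2 : (Fin.snoc (Fin.cons q.1 q.2 : Fin (i + 1) → n) b : Fin (i + 2) → n) =
              (Fin.cons q.1 (Fin.snoc q.2 b : Fin (i + 1) → n) : Fin (i + 2) → n) :=
            (Fin.cons_snoc_eq_snoc_cons q.1 q.2 b).symm
          conv_rhs => rw [h2, pathProd_cons, Fin.cons_zero]

/-- Product along the closed walk `u 0, u 1, ..., u k, u 0`. -/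
def cycProd (M : Matrix n n ℝ) {k : ℕ} (u : Fin (k + 1) → n) : ℝ :=
  pathProd M (Fin.snoc u (u 0))

lemma trace_pow_succ (M : Matrix n n ℝ) (i : ℕ) :
    (M ^ (i + 1)).trace = ∑ u : Fin (i + 1) → n, cycProd M u := by
  rw [Matrix.trace]
  calc ∑ a : n, (M ^ (i + 1)).diag a
      = ∑ a : n, ∑ w : Fin i → n, pathProd M (Fin.cons a (Fin.snoc w a)) := by
        exact Finset.sum_congr rfl fun a _ => pow_succ_apply M i a a
    _ = ∑ q : n × (Fin i → n), pathProd M (Fin.cons q.1 (Fin.snoc q.2 q.1)) := by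
        rw [Fintype.sum_prod_type]
    _ = ∑ u : Fin (i + 1) → n, cycProd M u := by
        refine Fintype.sum_equiv (Fin.consEquiv fun _ => n) _ _ fun q => ?_
        have he : (Fin.consEquiv fun _ => n) q = Fin.cons q.1 q.2 := rfl
        rw [he, cycProd, Fin.cons_zero, ← Fin.cons_snoc_eq_snoc_cons]

end Walks

section Transfer
variable {m : ℕ} (B : Matrix (Fin m) (Fin m) ℝ)

lemma cycProd_rsub {k : ℕ} (K : Finset (Fin m)) (u : Fin (k + 1) → K) :
    cycProd (rsub B K) u = cycProd B (fun j => (u j : Fin m)) := by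
  rw [cycProd, cycProd]
  have h : (fun j => ((Fin.snoc u (u 0) : Fin (k+2) → K) j : Fin m))
      = Fin.snoc (fun j => (u j : Fin m)) ((u 0 : Fin m)) := by
    exact Fin.comp_snoc (fun x : K => (x : Fin m)) u (u 0)
  calc pathProd (rsub B K) (Fin.snoc u (u 0))
      = pathProd B (fun j => ((Fin.snoc u (u 0) : Fin (k+2) → K) j : Fin m)) := rfl
    _ = pathProd B (Fin.snoc (fun j => (u j : Fin m)) ((u 0 : Fin m))) := by rw [h]

lemma cycProd_nonneg (hB : ∀ i j, 0 ≤ B i j) {k : ℕ} (u : Fin (k + 1) → Fin m) :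
    0 ≤ cycProd B u := by
  unfold cycProd pathProd
  exact Finset.prod_nonneg fun _ _ => hB _ _

/-- Functions into a finset, as a subtype of all functions. -/
def pifunEquiv (K : Finset (Fin m)) (k : ℕ) :
    (Fin k → K) ≃ {u : Fin k → Fin m // ∀ j, u j ∈ K} where
  toFun u := ⟨fun j => (u j : Fin m), fun j => (u j).2⟩
  invFun u j := ⟨u.1 j, u.2 j⟩
  left_inv u := rfl
  right_inv u := rfl

lemma trace_rsub_pow_succ (K : Finset (Fin m)) (i : ℕ) :
    ((rsub B K) ^ (i + 1)).trace
      = ∑ u : Fin (i + 1) → Fin m, if (∀ j, u j ∈ K) then cycProd B u else 0 := by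
  classical
  rw [trace_pow_succ]
  calc ∑ u : Fin (i + 1) → K, cycProd (rsub B K) u
      = ∑ v : {u : Fin (i + 1) → Fin m // ∀ j, u j ∈ K}, cycProd B v.1 := by
        refine Fintype.sum_equiv (pifunEquiv K (i + 1)) _ _ fun u => ?_
        rw [cycProd_rsub]
        rfl
    _ = ∑ u ∈ Finset.univ.filter (fun u : Fin (i + 1) → Fin m => ∀ j, u j ∈ K),
          cycProd B u := by
        exact (Finset.sum_subtype _ (fun u => by simp) _).symm
    _ = _ := Finset.sum_filter _ _

lemma trace_rsub_pow_supermodular (hB : ∀ i j, 0 ≤ B i j) (i : ℕ) (I J : Finset (Fin m)) :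
    ((rsub B I) ^ (i + 1)).trace + ((rsub B J) ^ (i + 1)).trace ≤
      ((rsub B (I ∪ J)) ^ (i + 1)).trace + ((rsub B (I ∩ J)) ^ (i + 1)).trace := by
  classical
  rw [trace_rsub_pow_succ, trace_rsub_pow_succ, trace_rsub_pow_succ, trace_rsub_pow_succ,
    ← Finset.sum_add_distrib, ← Finset.sum_add_distrib]
  refine Finset.sum_le_sum fun u _ => ?_
  have hc : 0 ≤ cycProd B u := cycProd_nonneg B hB u
  by_cases hI : ∀ j, u j ∈ I
  · by_cases hJ : ∀ j, u j ∈ J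
    · have hU : ∀ j, u j ∈ I ∪ J := fun j => Finset.mem_union_left _ (hI j)
      have hInt : ∀ j, u j ∈ I ∩ J := fun j => Finset.mem_inter.mpr ⟨hI j, hJ j⟩
      rw [if_pos hI, if_pos hJ, if_pos hU, if_pos hInt]
    · have hU : ∀ j, u j ∈ I ∪ J := fun j => Finset.mem_union_left _ (hI j)
      have hInt : ¬ ∀ j, u j ∈ I ∩ J := fun h => hJ fun j => (Finset.mem_inter.mp (h j)).2
      rw [if_pos hI, if_neg hJ, if_pos hU, if_neg hInt]
  · by_cases hJ : ∀ j, u j ∈ J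
    · have hU : ∀ j, u j ∈ I ∪ J := fun j => Finset.mem_union_right _ (hJ j)
      have hInt : ¬ ∀ j, u j ∈ I ∩ J := fun h => hI fun j => (Finset.mem_inter.mp (h j)).1
      rw [if_neg hI, if_pos hJ, if_pos hU, if_neg hInt]
      linarith
    · have h1 : (0:ℝ) ≤ if (∀ j, u j ∈ I ∪ J) then cycProd B u else 0 := by
        split
        · exact hc
        · exact le_rfl
      have h2 : (0:ℝ) ≤ if (∀ j, u j ∈ I ∩ J) then cycProd B u else 0 := by
        split
        · exact hc
        · exact le_rfl
      rw [if_neg hI, if_neg hJ]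
      linarith

lemma trace_rsub_one (K : Finset (Fin m)) :
    (rsub B K).trace = ∑ x ∈ K, B x x :=
  Finset.sum_coe_sort K (fun x => B x x)

end Transfer

section EntryBounds

variable {n : Type*} [Fintype n] [DecidableEq n]

lemma pow_entry_nonneg (M : Matrix n n ℝ) (h : ∀ a b, 0 ≤ M a b) :
    ∀ (i : ℕ) (a b : n), 0 ≤ (M ^ i) a b := by
  intro i
  induction i with
  | zero =>
    intro a b
    rw [pow_zero, Matrix.one_apply]
    split <;> norm_num
  | succ i ih =>
    intro a b
    rw [pow_succ, Matrix.mul_apply]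
    exact Finset.sum_nonneg fun c _ => mul_nonneg (ih a c) (h c b)

end EntryBounds

section SignLemmas
variable {p : ℝ}

lemma genBinom_succ (p : ℝ) (i : ℕ) :
    genBinom p (i + 1) = genBinom p i * ((p - i) / (i + 1)) := by
  unfold genBinom
  rw [Finset.prod_range_succ, Nat.factorial_succ]
  push_cast
  rw [div_mul_div_comm, mul_comm ((Nat.factorial i : ℝ)) ((i:ℝ) + 1)]

lemma sign_prod_neg (hp : p < 0) (i : ℕ) :
    0 ≤ (-1 : ℝ) ^ i * ∏ k ∈ Finset.range i, (p - k) := by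
  induction i with
  | zero => simp
  | succ i ih =>
    rw [Finset.prod_range_succ, pow_succ]
    have h : (0:ℝ) ≤ (i : ℝ) - p := by
      have : (0:ℝ) ≤ (i : ℝ) := Nat.cast_nonneg i
      linarith
    calc (0:ℝ) ≤ ((-1:ℝ) ^ i * ∏ k ∈ Finset.range i, (p - k)) * ((i : ℝ) - p) :=
          mul_nonneg ih h
      _ = (-1:ℝ) ^ i * -1 * ((∏ k ∈ Finset.range i, (p - k)) * (p - i)) := by ring

lemma sign_prod_one_two (hp1 : 1 ≤ p) (hp2 : p ≤ 2) :
    ∀ i : ℕ, 2 ≤ i → 0 ≤ (-1 : ℝ) ^ i * ∏ k ∈ Finset.range i, (p - k) := by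
  intro i hi
  induction i, hi using Nat.le_induction with
  | base =>
    have : (∏ k ∈ Finset.range 2, (p - k)) = p * (p - 1) := by
      rw [Finset.prod_range_succ, Finset.prod_range_one]
      norm_num
    rw [this]
    have h1 : (0:ℝ) ≤ p - 1 := by linarith
    have h2 : (0:ℝ) ≤ p := by linarith
    nlinarith
  | succ i hi ih =>
    rw [Finset.prod_range_succ, pow_succ]
    have h : (0:ℝ) ≤ (i : ℝ) - p := by
      have : (2:ℝ) ≤ (i : ℝ) := by exact_mod_cast hi
      linarith
    calc (0:ℝ) ≤ ((-1:ℝ) ^ i * ∏ k ∈ Finset.range i, (p - k)) * ((i : ℝ) - p) :=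
          mul_nonneg ih h
      _ = (-1:ℝ) ^ i * -1 * ((∏ k ∈ Finset.range i, (p - k)) * (p - i)) := by ring

/-- The binomial series coefficient is nonnegative for `i ≥ 2` (and all `i` if `p < 0`). -/
lemma coeff_nonneg {s : ℝ} (hs : 0 < s) (hp : p < 0 ∨ (1 ≤ p ∧ p ≤ 2)) (i : ℕ) (hi : 2 ≤ i) :
    0 ≤ s ^ p * genBinom p i * ((-s) ^ i)⁻¹ := by
  have hsign : 0 ≤ (-1 : ℝ) ^ i * ∏ k ∈ Finset.range i, (p - k) := by
    rcases hp with hp | ⟨hp1, hp2⟩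
    · exact sign_prod_neg hp i
    · exact sign_prod_one_two hp1 hp2 i hi
  have h1 : ((-s) ^ i)⁻¹ = (-1 : ℝ) ^ i * (s ^ i)⁻¹ := by
    rw [neg_pow, mul_inv, ← inv_pow, inv_neg_one]
  rw [h1, genBinom]
  have h2 : (0:ℝ) < s ^ p := Real.rpow_pos_of_pos hs p
  have h3 : (0:ℝ) < (Nat.factorial i : ℝ) := by positivity
  have h4 : (0:ℝ) < (s ^ i)⁻¹ := by positivity
  calc (0:ℝ) ≤ (s ^ p * (Nat.factorial i : ℝ)⁻¹ * (s ^ i)⁻¹)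
        * ((-1 : ℝ) ^ i * ∏ k ∈ Finset.range i, (p - k)) := by
        apply mul_nonneg _ hsign
        positivity
    _ = s ^ p * ((∏ k ∈ Finset.range i, (p - k)) / (Nat.factorial i))
        * ((-1 : ℝ) ^ i * (s ^ i)⁻¹) := by ring

end SignLemmas

lemma summable_genBinom_mul_pow (p : ℝ) {x : ℝ} (hx0 : 0 ≤ x) (hx1 : x < 1) :
    Summable fun i : ℕ => |genBinom p i| * x ^ i := by
  set r : ℝ := (1 + x) / 2 with hr
  have hxr : x < r := by rw [hr]; linarith
  have hr1 : r < 1 := by rw [hr]; linarith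
  refine summable_of_ratio_norm_eventually_le hr1 ?_
  rw [Filter.eventually_atTop]
  refine ⟨⌈(|p| + 1) / (r - x)⌉₊ + 1, fun i hi => ?_⟩
  have hiN : ((⌈(|p| + 1) / (r - x)⌉₊ : ℝ)) ≤ (i : ℝ) := by
    exact_mod_cast Nat.le_of_succ_le hi
  have hib : (|p| + 1) / (r - x) ≤ (i : ℝ) :=
    le_trans (Nat.le_ceil _) hiN
  have hrx : (0:ℝ) < r - x := by linarith
  have hkey : (|p| + (i:ℝ)) * x ≤ r * ((i:ℝ) + 1) := by
    have h1 : |p| + 1 ≤ (i : ℝ) * (r - x) := by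
      rw [div_le_iff₀ hrx] at hib
      linarith
    nlinarith [abs_nonneg p, Nat.cast_nonneg (α := ℝ) i]
  have habs : |p - (i : ℝ)| ≤ |p| + i := by
    calc |p - (i:ℝ)| ≤ |p| + |(i:ℝ)| := abs_sub _ _
      _ = |p| + i := by rw [abs_of_nonneg (Nat.cast_nonneg (α := ℝ) i)]
  have hgb : |genBinom p (i + 1)| = |genBinom p i| * (|p - i| / (i + 1)) := by
    rw [genBinom_succ, abs_mul, abs_div]
    congr 2
    rw [abs_of_nonneg]
    positivity
  rw [Real.norm_eq_abs, Real.norm_eq_abs, abs_mul, abs_mul, abs_abs, abs_abs,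
    abs_pow, abs_pow, abs_of_nonneg hx0]
  rw [hgb, pow_succ]
  have hi1 : (0:ℝ) < (i : ℝ) + 1 := by positivity
  calc |genBinom p i| * (|p - i| / (i + 1)) * (x ^ i * x)
      = |genBinom p i| * x ^ i * (|p - i| * x / (i + 1)) := by ring
    _ ≤ |genBinom p i| * x ^ i * r := by
        apply mul_le_mul_of_nonneg_left _ (by positivity)
        rw [div_le_iff₀ hi1]
        calc |p - (i:ℝ)| * x ≤ (|p| + i) * x := by
              apply mul_le_mul_of_nonneg_right habs hx0
          _ ≤ r * ((i:ℝ) + 1) := hkey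
    _ = r * (|genBinom p i| * x ^ i) := by ring

section Gelfand

attribute [local instance] Matrix.linftyOpNormedRing Matrix.linftyOpNormedAlgebra

variable {m : ℕ}

lemma entry_nnnorm_le_linfty (A : Matrix (Fin m) (Fin m) ℂ) (a b : Fin m) : ‖A a b‖₊ ≤ ‖A‖₊ := by
  rw [Matrix.linfty_opNNNorm_def]
  calc ‖A a b‖₊ ≤ ∑ j, ‖A a j‖₊ :=
        Finset.single_le_sum (f := fun j => ‖A a j‖₊) (fun j _ => zero_le) (Finset.mem_univ b)
    _ ≤ _ := Finset.le_sup (f := fun i => ∑ j, ‖A i j‖₊) (Finset.mem_univ a)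

lemma entry_norm_le_linfty (A : Matrix (Fin m) (Fin m) ℂ) (a b : Fin m) : ‖A a b‖ ≤ ‖A‖ :=
  entry_nnnorm_le_linfty A a b

lemma exists_entry_pow_bound (M : Matrix (Fin m) (Fin m) ℂ) {s : ℝ}
    (hs : spectralRadius ℂ M < ENNReal.ofReal s) :
    0 < s ∧ ∃ C r : ℝ, 1 ≤ C ∧ 0 < r ∧ r < s ∧
      ∀ (i : ℕ) (a b : Fin m), ‖(M ^ i) a b‖ ≤ C * r ^ i := by
  have hs0 : 0 < s := by
    by_contra h
    push_neg at h
    rw [ENNReal.ofReal_eq_zero.mpr h] at hs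
    exact zero_le.not_gt hs
  refine ⟨hs0, ?_⟩
  obtain ⟨t, ht1, ht2⟩ := exists_between hs
  have htne : t ≠ ⊤ := ht2.ne_top
  set r : ℝ := max t.toReal (s / 2) with hrdef
  have hr0 : 0 < r := lt_max_of_lt_right (by linarith)
  have hrs : r < s := by
    apply max_lt _ (by linarith)
    exact (ENNReal.lt_ofReal_iff_toReal_lt htne).mp ht2
  have htr : t ≤ ENNReal.ofReal r := by
    rw [ENNReal.le_ofReal_iff_toReal_le htne hr0.le]
    exact le_max_left _ _
  have hev := (spectrum.pow_nnnorm_pow_one_div_tendsto_nhds_spectralRadius M).eventually_lt_const ht1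
  rw [Filter.eventually_atTop] at hev
  obtain ⟨N, hN⟩ := hev
  have hpow : ∀ i, N + 1 ≤ i → ‖M ^ i‖ ≤ r ^ i := by
    intro i hi
    have hi0 : (i : ℝ) ≠ 0 := by
      have : 1 ≤ i := by omega
      positivity
    have h := hN i (by omega)
    have h2 : ((‖M ^ i‖₊ : ENNReal) ^ (1 / (i:ℝ))) ^ (i:ℝ)
        ≤ (ENNReal.ofReal r) ^ (i:ℝ) :=
      ENNReal.rpow_le_rpow (le_of_lt (lt_of_lt_of_le h htr)) (by positivity)
    rw [← ENNReal.rpow_mul, one_div, inv_mul_cancel₀ hi0, ENNReal.rpow_one] at h2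
    have h3 : (‖M ^ i‖₊ : ENNReal) ≤ ENNReal.ofReal (r ^ i) := by
      rw [← Real.rpow_natCast r i, ← ENNReal.ofReal_rpow_of_pos hr0]
      exact h2
    have h4 := ENNReal.toReal_mono ENNReal.ofReal_ne_top h3
    rw [ENNReal.coe_toReal, ENNReal.toReal_ofReal (by positivity)] at h4
    exact h4
  set C : ℝ := 1 + ∑ n ∈ Finset.range (N + 1), ‖M ^ n‖ / r ^ n with hCdef
  have hsum0 : 0 ≤ ∑ n ∈ Finset.range (N + 1), ‖M ^ n‖ / r ^ n :=
    Finset.sum_nonneg fun n _ => div_nonneg (norm_nonneg _) (by positivity)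
  have hC1 : 1 ≤ C := by rw [hCdef]; linarith
  refine ⟨C, r, hC1, hr0, hrs, fun i a b => ?_⟩
  have hMC : ‖M ^ i‖ ≤ C * r ^ i := by
    by_cases hi : N + 1 ≤ i
    · calc ‖M ^ i‖ ≤ r ^ i := hpow i hi
        _ = 1 * r ^ i := (one_mul _).symm
        _ ≤ C * r ^ i := mul_le_mul_of_nonneg_right hC1 (by positivity)
    · push_neg at hi
      have h5 : ‖M ^ i‖ / r ^ i ≤ ∑ n ∈ Finset.range (N + 1), ‖M ^ n‖ / r ^ n :=
        Finset.single_le_sum (fun n _ => div_nonneg (norm_nonneg _) (by positivity))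
          (Finset.mem_range.mpr hi)
      have h6 : ‖M ^ i‖ / r ^ i ≤ C := by rw [hCdef]; linarith
      rw [div_le_iff₀ (by positivity : (0:ℝ) < r ^ i)] at h6
      exact h6
  exact le_trans (entry_norm_le_linfty _ a b) hMC

end Gelfand

lemma exists_entry_pow_bound_real {m : ℕ} (B : Matrix (Fin m) (Fin m) ℝ) {s : ℝ}
    (hs : spectralRadius ℂ (B.map Complex.ofReal) < ENNReal.ofReal s) :
    0 < s ∧ ∃ C r : ℝ, 1 ≤ C ∧ 0 < r ∧ r < s ∧
      ∀ (i : ℕ) (a b : Fin m), |(B ^ i) a b| ≤ C * r ^ i := by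
  obtain ⟨hs0, C, r, hC1, hr0, hrs, hb⟩ := exists_entry_pow_bound (B.map Complex.ofReal) hs
  refine ⟨hs0, C, r, hC1, hr0, hrs, fun i a b => ?_⟩
  have hmap : (B.map Complex.ofReal) ^ i = (B ^ i).map Complex.ofReal := by
    have : B.map Complex.ofReal = (Complex.ofRealHom.mapMatrix : Matrix (Fin m) (Fin m) ℝ →+* _) B := rfl
    rw [this, ← map_pow]
    rfl
  have := hb i a b
  rw [hmap] at this
  rwa [Matrix.map_apply, Complex.norm_real] at this


section RsubBounds
variable {m : ℕ} (B : Matrix (Fin m) (Fin m) ℝ)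

lemma rsub_entry_nonneg (hB : ∀ a b, 0 ≤ B a b) (K : Finset (Fin m)) (i : ℕ) (a b : K) :
    0 ≤ ((rsub B K) ^ i) a b :=
  pow_entry_nonneg (rsub B K) (fun a b => hB _ _) i a b

lemma rsub_pow_entry_le (hB : ∀ a b, 0 ≤ B a b) (K : Finset (Fin m)) :
    ∀ (i : ℕ) (a b : K), ((rsub B K) ^ i) a b ≤ (B ^ i) (a : Fin m) (b : Fin m) := by
  intro i
  induction i with
  | zero =>
    intro a b
    rw [pow_zero, pow_zero, Matrix.one_apply, Matrix.one_apply]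
    by_cases h : a = b
    · rw [if_pos h, if_pos (congrArg _ h)]
    · rw [if_neg h, if_neg fun hc => h (Subtype.coe_injective hc)]
  | succ i ih =>
    intro a b
    rw [pow_succ, pow_succ, Matrix.mul_apply, Matrix.mul_apply]
    calc ∑ c : K, ((rsub B K) ^ i) a c * (rsub B K) c b
        ≤ ∑ c : K, (B ^ i) (a : Fin m) (c : Fin m) * B (c : Fin m) (b : Fin m) := by
          refine Finset.sum_le_sum fun c _ => ?_
          exact mul_le_mul_of_nonneg_right (ih a c) (hB _ _)
      _ = ∑ c ∈ K, (B ^ i) (a : Fin m) c * B c (b : Fin m) :=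
          Finset.sum_coe_sort K (fun c => (B ^ i) (a : Fin m) c * B c (b : Fin m))
      _ ≤ ∑ c : Fin m, (B ^ i) (a : Fin m) c * B c (b : Fin m) := by
          refine Finset.sum_le_sum_of_subset_of_nonneg (Finset.subset_univ K) fun c _ _ => ?_
          exact mul_nonneg (pow_entry_nonneg B hB i _ _) (hB _ _)

end RsubBounds

theorem trace_mmatrix_rpow_supermodular {m : ℕ} (B : Matrix (Fin m) (Fin m) ℝ)
    (hB : ∀ i j, 0 ≤ B i j) (s : ℝ)
    (hs : spectralRadius ℂ (B.map (Complex.ofReal)) < ENNReal.ofReal s)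
    (p : ℝ) (hp : p < 0 ∨ (1 ≤ p ∧ p ≤ 2)) (I J : Finset (Fin m)) :
    Matrix.trace (mPow s p (rsub B I)) + Matrix.trace (mPow s p (rsub B J)) ≤
      Matrix.trace (mPow s p (rsub B (I ∪ J))) + Matrix.trace (mPow s p (rsub B (I ∩ J))) := by
  classical
  obtain ⟨hs0, C, r, hC1, hr0, hrs, hEnt⟩ := exists_entry_pow_bound_real B hs
  set c : ℕ → ℝ := fun i => s ^ p * genBinom p i * ((-s) ^ i)⁻¹ with hc
  have hsp : (0:ℝ) < s ^ p := Real.rpow_pos_of_pos hs0 p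
  have hx0 : (0:ℝ) ≤ r / s := by positivity
  have hx1 : r / s < 1 := (div_lt_one hs0).mpr hrs
  have hu : Summable fun i : ℕ => |genBinom p i| * (r / s) ^ i :=
    summable_genBinom_mul_pow p hx0 hx1
  have habs : ∀ i, |c i| = s ^ p * |genBinom p i| * (s ^ i)⁻¹ := by
    intro i
    rw [hc]
    rw [abs_mul, abs_mul, abs_inv, abs_pow, abs_neg, abs_of_pos hs0, abs_of_pos hsp]
  -- bound on the diagonal entries of powers of submatrices
  have hdiag : ∀ (K : Finset (Fin m)) (i : ℕ) (a : K), ((rsub B K) ^ i) a a ≤ C * r ^ i :=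
    fun K i a => le_trans (rsub_pow_entry_le B hB K i a a)
      (le_trans (le_abs_self _) (hEnt i _ _))
  -- summability of the coefficient-weighted traces
  have htrb : ∀ (K : Finset (Fin m)) (i : ℕ),
      ‖c i * ((rsub B K) ^ i).trace‖ ≤ (s ^ p * C * m) * (|genBinom p i| * (r / s) ^ i) := by
    intro K i
    have h1 : |((rsub B K) ^ i).trace| ≤ (m : ℝ) * (C * r ^ i) := by
      rw [Matrix.trace]
      calc |∑ a : K, ((rsub B K) ^ i).diag a| ≤ ∑ a : K, |((rsub B K) ^ i) a a| :=
            Finset.abs_sum_le_sum_abs _ _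
        _ ≤ ∑ _a : K, C * r ^ i := by
            refine Finset.sum_le_sum fun a _ => ?_
            rw [abs_of_nonneg (rsub_entry_nonneg B hB K i a a)]
            exact hdiag K i a
        _ = (Fintype.card K : ℝ) * (C * r ^ i) := by
            rw [Finset.sum_const, nsmul_eq_mul, Fintype.card_coe]
            norm_num [Fintype.card_coe]
        _ ≤ (m : ℝ) * (C * r ^ i) := by
            have hcard : (Fintype.card K : ℝ) ≤ (m : ℝ) := by
              have := Finset.card_le_univ K
              rw [Fintype.card_coe]
              exact_mod_cast le_trans this (le_of_eq (Finset.card_fin m))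
            exact mul_le_mul_of_nonneg_right hcard (by positivity)
    rw [Real.norm_eq_abs, abs_mul, habs i]
    calc s ^ p * |genBinom p i| * (s ^ i)⁻¹ * |((rsub B K) ^ i).trace|
        ≤ s ^ p * |genBinom p i| * (s ^ i)⁻¹ * ((m : ℝ) * (C * r ^ i)) := by
          refine mul_le_mul_of_nonneg_left h1 ?_
          positivity
      _ = (s ^ p * C * m) * (|genBinom p i| * (r / s) ^ i) := by
          rw [div_pow]
          field_simp
  have hts : ∀ K : Finset (Fin m), Summable (fun i => c i * ((rsub B K) ^ i).trace) :=
    fun K => Summable.of_norm_bounded (hu.mul_left (s ^ p * C * m)) (htrb K)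
  -- summability of the matrix series
  have hms : ∀ K : Finset (Fin m), Summable (fun i => c i • (rsub B K) ^ i) := by
    intro K
    refine Pi.summable.mpr fun a => Pi.summable.mpr fun b => ?_
    refine Summable.of_norm_bounded (hu.mul_left (s ^ p * C)) fun i => ?_
    have hab : |((rsub B K) ^ i) a b| ≤ C * r ^ i :=
      le_trans (le_trans (le_of_eq (abs_of_nonneg (rsub_entry_nonneg B hB K i a b)))
        (rsub_pow_entry_le B hB K i a b)) (le_trans (le_abs_self _) (hEnt i _ _))
    have : (c i • (rsub B K) ^ i) a b = c i * ((rsub B K) ^ i) a b := rfl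
    rw [Real.norm_eq_abs, this, abs_mul, habs i]
    calc s ^ p * |genBinom p i| * (s ^ i)⁻¹ * |((rsub B K) ^ i) a b|
        ≤ s ^ p * |genBinom p i| * (s ^ i)⁻¹ * (C * r ^ i) := by
          refine mul_le_mul_of_nonneg_left hab ?_
          positivity
      _ = (s ^ p * C) * (|genBinom p i| * (r / s) ^ i) := by
          rw [div_pow]
          field_simp
  -- trace of the matrix power series
  have htr : ∀ K : Finset (Fin m),
      (mPow s p (rsub B K)).trace = ∑' i, c i * ((rsub B K) ^ i).trace := by
    intro K
    have hcont : Continuous fun A : Matrix K K ℝ => A.trace := by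
      refine continuous_finset_sum _ fun a _ => ?_
      exact Continuous.matrix_elem continuous_id a a
    have h2 : HasSum (fun i => (c i • (rsub B K) ^ i).trace)
        ((∑' i, c i • (rsub B K) ^ i).trace) :=
      ((hms K).hasSum.map (Matrix.traceAddMonoidHom K ℝ) hcont)
    calc (mPow s p (rsub B K)).trace = (∑' i, c i • (rsub B K) ^ i).trace := rfl
      _ = ∑' i, (c i • (rsub B K) ^ i).trace := h2.tsum_eq.symm
      _ = ∑' i, c i * ((rsub B K) ^ i).trace := by
          refine tsum_congr fun i => ?_
          rw [Matrix.trace_smul]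
          rfl
  -- the termwise supermodularity
  have key : ∀ i : ℕ,
      c i * ((rsub B I) ^ i).trace + c i * ((rsub B J) ^ i).trace ≤
        c i * ((rsub B (I ∪ J)) ^ i).trace + c i * ((rsub B (I ∩ J)) ^ i).trace := by
    intro i
    match i with
    | 0 =>
      have ht : ∀ K : Finset (Fin m), ((rsub B K) ^ 0).trace = (K.card : ℝ) := by
        intro K
        rw [pow_zero, Matrix.trace_one, Fintype.card_coe]
      rw [ht, ht, ht, ht, ← mul_add, ← mul_add]
      have hcard : ((I ∪ J).card : ℝ) + ((I ∩ J).card : ℝ) = (I.card : ℝ) + (J.card : ℝ) := by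
        exact_mod_cast congrArg (Nat.cast (R := ℝ)) (Finset.card_union_add_card_inter I J)
      rw [← hcard]
    | 1 =>
      rw [pow_one, pow_one, pow_one, pow_one, trace_rsub_one, trace_rsub_one,
        trace_rsub_one, trace_rsub_one, ← mul_add, ← mul_add, ← Finset.sum_union_inter]
    | (k + 2) =>
      rw [← mul_add, ← mul_add]
      refine mul_le_mul_of_nonneg_left ?_ (coeff_nonneg hs0 hp (k + 2) (by omega))
      exact trace_rsub_pow_supermodular B hB (k + 1) I J
  rw [htr I, htr J, htr (I ∪ J), htr (I ∩ J),
    ← Summable.tsum_add (hts I) (hts J), ← Summable.tsum_add (hts (I ∪ J)) (hts (I ∩ J))]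
  exact Summable.tsum_le_tsum key ((hts I).add (hts J)) ((hts (I ∪ J)).add (hts (I ∩ J)))
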